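/- arXiv:2601.22010 — 3 statements merged into one kernel-verified Lean document; each statement's English description precedes it below -/
import Mathlib

section
/- Let $H \in \mathbb{R}^{d\times N}$ have rank $r \le d - N$ and let $\alpha > 0$. Then there exists a matrix $V \in \mathbb{R}^{d\times N}$ with $V^\top V = \alpha I_N$ such that the matrix $(H+V)^\top (H+V)$ is positive definite. -/
open Matrix
open scoped RealInnerProductSpace

theorem stmt_0 (d N : ℕ) (hdN : N ≤ d) (H : Matrix (Fin d) (Fin N) ℝ) (α : ℝ) (hα : 0 < α)
    (hrank : H.rank ≤ d - N) :
    ∃ V : Matrix (Fin d) (Fin N) ℝ,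
      Vᵀ * V = α • (1 : Matrix (Fin N) (Fin N) ℝ) ∧ ((H + V)ᵀ * (H + V)).PosDef := by
  classical
  let e : (Fin d → ℝ) ≃ₗ[ℝ] EuclideanSpace ℝ (Fin d) :=
    (WithLp.linearEquiv 2 ℝ (Fin d → ℝ)).symm
  let K : Submodule ℝ (EuclideanSpace ℝ (Fin d)) := (LinearMap.range H.mulVecLin).map e.toLinearMap
  have hKrank : Module.finrank ℝ K = H.rank := by
    rw [Matrix.rank]
    exact (LinearEquiv.finrank_map_eq e _).symm ▸ rfl
  have h1 : Module.finrank ℝ K + Module.finrank ℝ Kᗮ = d := by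
    rw [K.finrank_add_finrank_orthogonal]
    simp
  have hdim : N ≤ Module.finrank ℝ Kᗮ := by omega
  let b := stdOrthonormalBasis ℝ Kᗮ
  let f : Fin N → EuclideanSpace ℝ (Fin d) := fun j => (b (Fin.castLE hdim j) : _)
  have hfmem : ∀ j, f j ∈ Kᗮ := fun j => (b (Fin.castLE hdim j)).2
  have hinner : ∀ j k, ⟪f j, f k⟫ = if j = k then 1 else 0 := by
    intro j k
    have h := orthonormal_iff_ite.mp b.orthonormal (Fin.castLE hdim j) (Fin.castLE hdim k)
    rw [Submodule.coe_inner] at h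
    simpa [Fin.castLE_inj] using h
  let V : Matrix (Fin d) (Fin N) ℝ := Matrix.of fun i j => Real.sqrt α * f j i
  have hVtV : Vᵀ * V = α • (1 : Matrix (Fin N) (Fin N) ℝ) := by
    ext j k
    have h := hinner j k
    simp only [PiLp.inner_apply, RCLike.inner_apply, starRingEnd_apply, star_trivial] at h
    simp only [Matrix.mul_apply, transpose_apply, Matrix.of_apply, Matrix.smul_apply,
      Matrix.one_apply, smul_eq_mul, V]
    calc ∑ i, (Real.sqrt α * f j i) * (Real.sqrt α * f k i)
        = α * ∑ i, f j i * f k i := by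
          rw [Finset.mul_sum]
          refine Finset.sum_congr rfl fun i _ => ?_
          rw [mul_mul_mul_comm, Real.mul_self_sqrt hα.le]
      _ = α * if j = k then 1 else 0 := by
          rw [← h]; congr 1; exact Finset.sum_congr rfl fun i _ => mul_comm _ _
      _ = _ := by split <;> simp
  -- V *ᵥ x viewed in Euclidean space lies in Kᗮ
  have hVmem : ∀ x : Fin N → ℝ, e (V *ᵥ x) ∈ Kᗮ := by
    intro x
    have hVx : e (V *ᵥ x) = ∑ j, (Real.sqrt α * x j) • f j := by
      apply e.symm.injective
      rw [e.symm_apply_apply, map_sum]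
      funext i
      rw [Finset.sum_apply]
      simp [Matrix.mulVec, dotProduct, V, e, mul_comm, mul_assoc]
    rw [hVx]
    exact Submodule.sum_mem _ fun j _ => Submodule.smul_mem _ _ (hfmem j)
  have hVinj : ∀ x : Fin N → ℝ, V *ᵥ x = 0 → x = 0 := by
    intro x hx
    have h2 : (Vᵀ * V) *ᵥ x = 0 := by rw [← mulVec_mulVec, hx, mulVec_zero]
    rw [hVtV] at h2
    have h3 : α • x = 0 := by simpa [smul_mulVec] using h2
    rcases smul_eq_zero.mp h3 with h | h
    · exact absurd h hα.ne'
    · exact h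
  have hMinj : ∀ x : Fin N → ℝ, x ≠ 0 → (H + V) *ᵥ x ≠ 0 := by
    intro x hx hzero
    rw [add_mulVec] at hzero
    have hu : e (H *ᵥ x) ∈ K := Submodule.mem_map_of_mem ⟨x, rfl⟩
    have hv : e (V *ᵥ x) ∈ Kᗮ := hVmem x
    have hsum : e (H *ᵥ x) + e (V *ᵥ x) = 0 := by rw [← map_add, hzero, map_zero]
    have huv : e (H *ᵥ x) = -(e (V *ᵥ x)) := eq_neg_of_add_eq_zero_left hsum
    have hmem2 : e (H *ᵥ x) ∈ K ⊓ Kᗮ := ⟨hu, by rw [huv]; exact neg_mem hv⟩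
    rw [Submodule.inf_orthogonal_eq_bot, Submodule.mem_bot] at hmem2
    have hv0 : e (V *ᵥ x) = 0 := by rw [← neg_eq_zero, ← huv, hmem2]
    have : V *ᵥ x = 0 := by
      have := congrArg e.symm hv0
      simpa using this
    exact hx (hVinj x this)
  refine ⟨V, hVtV, PosDef.of_dotProduct_mulVec_pos
    (by simpa using isHermitian_conjTranspose_mul_self (H + V)) fun x hx => ?_⟩
  set M := H + V
  have key : star x ⬝ᵥ (Mᵀ * M) *ᵥ x = (M *ᵥ x) ⬝ᵥ (M *ᵥ x) := by
    rw [star_trivial, ← mulVec_mulVec, dotProduct_mulVec, vecMul_transpose]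
  rw [key]
  have hMx : M *ᵥ x ≠ 0 := hMinj x hx
  have : 0 < ∑ i, (M *ᵥ x) i * (M *ᵥ x) i := by
    apply Finset.sum_pos' (fun i _ => mul_self_nonneg _)
    obtain ⟨i, hi⟩ := Function.ne_iff.mp hMx
    exact ⟨i, Finset.mem_univ i, mul_self_pos.mpr (by simpa using hi)⟩
  simpa [dotProduct] using this
end

section
/- Let $\alpha > 0$, $V \in \mathbb{R}^{d\times N}$ with $V^\top V = \alpha I$, and $U$ in the tangent space at $V$ (i.e., $V^\top U + U^\top V = 0$) with $\|U\|_F \le \sqrt{\alpha}$. Then the polar retraction $\mathrm{R}_V(U) = \sqrt{\alpha}(V+U)(\alpha I + U^\top U)^{-1/2}$ satisfies $\|\mathrm{R}_V(U) - (V+U)\|_F \le \frac{1}{\sqrt{\alpha}}\|U\|_F^2$. -/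
open Matrix

/-- Frobenius norm of a real matrix. -/
noncomputable def frob {m n : Type*} [Fintype m] [Fintype n] (A : Matrix m n ℝ) : ℝ :=
  Real.sqrt (Matrix.trace (Aᵀ * A))

open scoped ComplexOrder in
/-- The positive semidefinite square root of a positive semidefinite matrix
(the definition `Matrix.PosSemidef.sqrt` of the older Mathlib, removed since). -/
noncomputable def Matrix.PosSemidef.sqrt {n : Type*} {𝕜 : Type*} [Fintype n] [DecidableEq n]
    [RCLike 𝕜] {A : Matrix n n 𝕜} (hA : A.PosSemidef) : Matrix n n 𝕜 :=
  hA.1.eigenvectorUnitary.1 * diagonal ((↑) ∘ (√·) ∘ hA.1.eigenvalues) *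
    (star hA.1.eigenvectorUnitary : Matrix n n 𝕜)

open scoped ComplexOrder in
lemma Matrix.PosSemidef.posSemidef_sqrt {n : Type*} {𝕜 : Type*} [Fintype n] [DecidableEq n]
    [RCLike 𝕜] {A : Matrix n n 𝕜} (hA : A.PosSemidef) : hA.sqrt.PosSemidef := by
  have hD : (diagonal ((↑) ∘ (√·) ∘ hA.1.eigenvalues : n → 𝕜)).PosSemidef :=
    PosSemidef.diagonal fun i => by simp [RCLike.ofReal_nonneg, Real.sqrt_nonneg]
  have := hD.mul_mul_conjTranspose_same (hA.1.eigenvectorUnitary : Matrix n n 𝕜)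
  unfold Matrix.PosSemidef.sqrt
  simpa [Matrix.star_eq_conjTranspose] using this

open scoped ComplexOrder in
lemma Matrix.PosSemidef.sqrt_mul_self {n : Type*} {𝕜 : Type*} [Fintype n] [DecidableEq n]
    [RCLike 𝕜] {A : Matrix n n 𝕜} (hA : A.PosSemidef) : hA.sqrt * hA.sqrt = A := by
  conv_rhs => rw [hA.1.spectral_theorem, Unitary.conjStarAlgAut_apply]
  unfold Matrix.PosSemidef.sqrt
  have hu : (star hA.1.eigenvectorUnitary : Matrix n n 𝕜) * hA.1.eigenvectorUnitary.1 = 1 :=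
    Unitary.star_mul_self_of_mem hA.1.eigenvectorUnitary.2
  have hd : diagonal ((↑) ∘ (√·) ∘ hA.1.eigenvalues : n → 𝕜) *
      diagonal ((↑) ∘ (√·) ∘ hA.1.eigenvalues : n → 𝕜) =
      diagonal (RCLike.ofReal ∘ hA.1.eigenvalues) := by
    rw [diagonal_mul_diagonal]
    congr 1
    funext i
    simp only [Function.comp_apply, ← RCLike.ofReal_mul]
    rw [Real.mul_self_sqrt (hA.eigenvalues_nonneg i)]
  calc _ = hA.1.eigenvectorUnitary.1 * diagonal ((↑) ∘ (√·) ∘ hA.1.eigenvalues : n → 𝕜) *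
      ((star hA.1.eigenvectorUnitary : Matrix n n 𝕜) * hA.1.eigenvectorUnitary.1) *
      diagonal ((↑) ∘ (√·) ∘ hA.1.eigenvalues : n → 𝕜) *
      (star hA.1.eigenvectorUnitary : Matrix n n 𝕜) := by simp only [Matrix.mul_assoc]
    _ = _ := by rw [hu, Matrix.mul_one, Matrix.mul_assoc _ (diagonal _) (diagonal _), hd]

section Aux

variable {m n : Type*} [Fintype m] [Fintype n] [DecidableEq n]

lemma aux_trace_transpose_mul_self_nonneg (A : Matrix m n ℝ) :
    0 ≤ Matrix.trace (Aᵀ * A) := by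
  simp only [Matrix.trace, Matrix.diag, Matrix.mul_apply, Matrix.transpose_apply]
  exact Finset.sum_nonneg fun j _ => Finset.sum_nonneg fun i _ => mul_self_nonneg _

lemma aux_psd_smul {A : Matrix n n ℝ} (hA : A.PosSemidef) {c : ℝ} (hc : 0 ≤ c) :
    (c • A).PosSemidef := by
  refine ⟨?_, fun x => ?_⟩
  · unfold Matrix.IsHermitian
    rw [Matrix.conjTranspose_smul, hA.isHermitian.eq]
    simp
  · exact (hA.smul hc).2 x

lemma aux_psd_trace_nonneg {A : Matrix n n ℝ} (hA : A.PosSemidef) :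
    0 ≤ Matrix.trace A := by
  have h : ∀ i, 0 ≤ A i i := by
    intro i
    exact hA.diag_nonneg
  exact Finset.sum_nonneg fun i _ => h i

lemma aux_smul_one_posDef {c : ℝ} (hc : 0 < c) :
    (c • (1 : Matrix n n ℝ)).PosDef := by
  refine ⟨?_, fun x hx => ?_⟩
  · unfold Matrix.IsHermitian
    rw [Matrix.conjTranspose_smul]
    simp
  · exact (PosDef.one.smul hc).2 hx

lemma aux_psd_conj {A : Matrix n n ℝ} (hA : A.PosSemidef) (B : Matrix n n ℝ) :
    (Bᵀ * A * B).PosSemidef := by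
  have := hA.conjTranspose_mul_mul_same B
  rwa [Matrix.conjTranspose_eq_transpose_of_trivial] at this

end Aux

theorem stmt_4 (d N : ℕ) (V U : Matrix (Fin d) (Fin N) ℝ) (α : ℝ) (hα : 0 < α)
    (hV : Vᵀ * V = α • (1 : Matrix (Fin N) (Fin N) ℝ))
    (hU : Vᵀ * U + Uᵀ * V = 0)
    (hUF : frob U ≤ Real.sqrt α)
    (hP : (α • (1 : Matrix (Fin N) (Fin N) ℝ) + Uᵀ * U).PosSemidef) :
    frob (Real.sqrt α • ((V + U) * (hP.sqrt)⁻¹) - (V + U)) ≤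
      (1 / Real.sqrt α) * frob U ^ 2 := by
  set s : ℝ := Real.sqrt α with hs_def
  have hs : 0 < s := Real.sqrt_pos.mpr hα
  have hs2 : s * s = α := Real.mul_self_sqrt hα.le
  set K : Matrix (Fin N) (Fin N) ℝ := Uᵀ * U with hK_def
  have hKpsd : K.PosSemidef := by
    have := Matrix.posSemidef_conjTranspose_mul_self U
    rwa [Matrix.conjTranspose_eq_transpose_of_trivial] at this
  have hKsym : Kᵀ = K := by rw [hK_def, Matrix.transpose_mul, Matrix.transpose_transpose]
  set P : Matrix (Fin N) (Fin N) ℝ := hP.sqrt with hP_def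
  have hPpsd : P.PosSemidef := hP.posSemidef_sqrt
  have hPsym : Pᵀ = P := by
    have := hPpsd.isHermitian.eq
    rwa [Matrix.conjTranspose_eq_transpose_of_trivial] at this
  have hPP : P * P = α • 1 + K := hP.sqrt_mul_self
  -- S = α•1 + K is positive definite
  have hSpd : (α • (1 : Matrix (Fin N) (Fin N) ℝ) + K).PosDef :=
    (aux_smul_one_posDef hα).add_posSemidef hKpsd
  have hPdet : IsUnit P.det := by
    have h1 : P.det * P.det = (α • (1 : Matrix (Fin N) (Fin N) ℝ) + K).det := by
      rw [← Matrix.det_mul, hPP]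
    have h2 : (0:ℝ) < (α • (1 : Matrix (Fin N) (Fin N) ℝ) + K).det := hSpd.det_pos
    have : P.det ≠ 0 := by
      intro h
      rw [h, mul_zero] at h1
      exact h2.ne h1
    exact this.isUnit
  have hPinv : P * P⁻¹ = 1 := Matrix.mul_nonsing_inv P hPdet
  -- Q = s•1 + P
  set Q : Matrix (Fin N) (Fin N) ℝ := s • 1 + P with hQ_def
  have hQpd : Q.PosDef := (aux_smul_one_posDef hs).add_posSemidef hPpsd
  have hQdet : IsUnit Q.det := hQpd.isUnit.map (Matrix.detMonoidHom)
  have hQinv : Q * Q⁻¹ = 1 := Matrix.mul_nonsing_inv Q hQdet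
  have hQinv' : Q⁻¹ * Q = 1 := Matrix.nonsing_inv_mul Q hQdet
  have hQsym : Qᵀ = Q := by
    rw [hQ_def, Matrix.transpose_add, Matrix.transpose_smul, Matrix.transpose_one, hPsym]
  have hQinvsym : (Q⁻¹)ᵀ = Q⁻¹ := by
    rw [Matrix.transpose_nonsing_inv, hQsym]
  -- E = s•1 - P
  set E : Matrix (Fin N) (Fin N) ℝ := s • 1 - P with hE_def
  have hEsym : Eᵀ = E := by
    rw [hE_def, Matrix.transpose_sub, Matrix.transpose_smul, Matrix.transpose_one, hPsym]
  have hEQ : E * Q = -K := by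
    rw [hE_def, hQ_def]
    simp only [Matrix.sub_mul, Matrix.mul_add, Matrix.smul_mul, Matrix.mul_smul,
      Matrix.one_mul, Matrix.mul_one, smul_add, smul_sub, smul_smul, hs2, hPP]
    abel
  have hE_eq : E = -K * Q⁻¹ := by
    calc E = E * (Q * Q⁻¹) := by rw [hQinv, Matrix.mul_one]
    _ = (E * Q) * Q⁻¹ := by rw [Matrix.mul_assoc]
    _ = -K * Q⁻¹ := by rw [hEQ]
  -- Step A: the matrix in question has the same frob as E
  have hW : (V + U)ᵀ * (V + U) = P * P := by
    rw [hPP, hK_def, Matrix.transpose_add, Matrix.add_mul, Matrix.mul_add, Matrix.mul_add]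
    have hVU : Vᵀ * U = -(Uᵀ * V) := eq_neg_of_add_eq_zero_left hU
    rw [hV, hVU]
    abel
  set X : Matrix (Fin N) (Fin N) ℝ := s • P⁻¹ - 1 with hX_def
  have hLX : s • ((V + U) * P⁻¹) - (V + U) = (V + U) * X := by
    rw [hX_def, Matrix.mul_sub, Matrix.mul_one, Matrix.mul_smul]
  have hPX : P * X = E := by
    rw [hX_def, hE_def, Matrix.mul_sub, Matrix.mul_one, Matrix.mul_smul, hPinv]
  have hfrobL : frob ((V + U) * X) = frob E := by
    unfold frob
    congr 1
    conv_rhs => rw [← hPX, Matrix.transpose_mul, hPsym, Matrix.mul_assoc]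
    rw [Matrix.transpose_mul, Matrix.mul_assoc Xᵀ, ← Matrix.mul_assoc (V+U)ᵀ, hW,
      Matrix.mul_assoc P, hPX]
  -- Step B: bound trace (Eᵀ * E)
  set B : Matrix (Fin N) (Fin N) ℝ := Q⁻¹ * Q⁻¹ with hB_def
  have hEt : Eᵀ = -(Q⁻¹ * K) := by
    rw [hE_eq, Matrix.transpose_mul, Matrix.transpose_neg, hKsym, hQinvsym, Matrix.mul_neg]
  have htraceE : Matrix.trace (Eᵀ * E) = Matrix.trace (K * B * K) := by
    calc Matrix.trace (Eᵀ * E) = Matrix.trace ((Q⁻¹ * K) * (K * Q⁻¹)) := by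
          rw [hEt, hE_eq]; simp only [Matrix.neg_mul, Matrix.mul_neg, neg_neg]
      _ = Matrix.trace ((K * Q⁻¹) * (Q⁻¹ * K)) := Matrix.trace_mul_comm _ _
      _ = Matrix.trace (K * B * K) := by rw [hB_def]; simp only [Matrix.mul_assoc]
  -- (α⁻¹ • 1 - B) is psd
  have hQQ : Q * Q - α • 1 = (2 * s) • P + P * P := by
    rw [hQ_def, Matrix.add_mul, Matrix.mul_add, Matrix.mul_add]
    simp only [Matrix.smul_mul, Matrix.mul_smul, Matrix.one_mul, Matrix.mul_one, smul_smul, hs2]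
    rw [two_mul, add_smul]
    abel
  have hQQpsd : (Q * Q - α • 1).PosSemidef := by
    rw [hQQ]
    exact (aux_psd_smul hPpsd (by positivity)).add (hPP ▸ hP)
  have hBpsd : (α⁻¹ • (1 : Matrix (Fin N) (Fin N) ℝ) - B).PosSemidef := by
    have hconj := aux_psd_conj hQQpsd Q⁻¹
    rw [hQinvsym] at hconj
    have heq : Q⁻¹ * (Q * Q - α • 1) * Q⁻¹ = 1 - α • B := by
      rw [Matrix.mul_sub, Matrix.sub_mul, Matrix.mul_smul, Matrix.smul_mul,
        ← Matrix.mul_assoc, hQinv', Matrix.one_mul, hQinv, hB_def, Matrix.mul_one]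
    rw [heq] at hconj
    have := aux_psd_smul hconj (le_of_lt (inv_pos.mpr hα))
    have heq2 : α⁻¹ • ((1 : Matrix (Fin N) (Fin N) ℝ) - α • B) = α⁻¹ • 1 - B := by
      rw [smul_sub, smul_smul, inv_mul_cancel₀ hα.ne', one_smul]
    rwa [heq2] at this
  have htraceB : Matrix.trace (K * B * K) ≤ α⁻¹ * Matrix.trace (K * K) := by
    have hconj := aux_psd_conj hBpsd K
    rw [hKsym] at hconj
    have h0 := aux_psd_trace_nonneg hconj
    have heq : K * (α⁻¹ • (1 : Matrix (Fin N) (Fin N) ℝ) - B) * K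
        = α⁻¹ • (K * K) - K * B * K := by
      rw [Matrix.mul_sub, Matrix.sub_mul, Matrix.mul_smul, Matrix.smul_mul, Matrix.mul_one]
    rw [heq, Matrix.trace_sub, Matrix.trace_smul] at h0
    simp only [smul_eq_mul] at h0
    linarith
  -- Step C: trace (K * K) ≤ (trace K)^2
  have htraceKK : Matrix.trace (K * K) ≤ (Matrix.trace K) ^ 2 := by
    have hKexp : ∀ i j, K i j = ∑ k, U k i * U k j := by
      intro i j
      simp [hK_def, Matrix.mul_apply, Matrix.transpose_apply]
    have hCS : ∀ i j, (K i j) ^ 2 ≤ K i i * K j j := by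
      intro i j
      rw [hKexp i j, hKexp i i, hKexp j j]
      have := Finset.sum_mul_sq_le_sq_mul_sq Finset.univ (fun k => U k i) (fun k => U k j)
      calc (∑ k, U k i * U k j) ^ 2 ≤ (∑ k, (U k i) ^ 2) * ∑ k, (U k j) ^ 2 := this
        _ = (∑ k, U k i * U k i) * ∑ k, U k j * U k j := by simp [sq]
    calc Matrix.trace (K * K) = ∑ i, ∑ j, K i j * K j i := by
          simp [Matrix.trace, Matrix.diag, Matrix.mul_apply]
      _ = ∑ i, ∑ j, (K i j) ^ 2 := by
          refine Finset.sum_congr rfl fun i _ => Finset.sum_congr rfl fun j _ => ?_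
          have hji : K j i = K i j := by
            rw [hKexp j i, hKexp i j]
            exact Finset.sum_congr rfl fun k _ => mul_comm _ _
          rw [hji, sq]
      _ ≤ ∑ i, ∑ j, K i i * K j j := by
          refine Finset.sum_le_sum fun i _ => Finset.sum_le_sum fun j _ => hCS i j
      _ = (Matrix.trace K) ^ 2 := by
          rw [sq, Matrix.trace, Finset.sum_mul]
          refine Finset.sum_congr rfl fun i _ => ?_
          rw [Finset.mul_sum]
          rfl
  -- Put it together
  have hTrK : Matrix.trace K = frob U ^ 2 := by
    unfold frob
    rw [Real.sq_sqrt (aux_trace_transpose_mul_self_nonneg U)]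
  have hTrKnn : 0 ≤ Matrix.trace K := aux_psd_trace_nonneg hKpsd
  have hbound : Matrix.trace (Eᵀ * E) ≤ (Matrix.trace K / s) ^ 2 := by
    rw [htraceE]
    calc Matrix.trace (K * B * K) ≤ α⁻¹ * Matrix.trace (K * K) := htraceB
      _ ≤ α⁻¹ * (Matrix.trace K) ^ 2 := by
          exact mul_le_mul_of_nonneg_left htraceKK (le_of_lt (inv_pos.mpr hα))
      _ = (Matrix.trace K / s) ^ 2 := by
          rw [div_pow, sq s, hs2]
          ring
  have hfrobE : frob E ≤ Matrix.trace K / s := by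
    unfold frob
    have h1 : Real.sqrt (Matrix.trace (Eᵀ * E)) ≤ Real.sqrt ((Matrix.trace K / s) ^ 2) :=
      Real.sqrt_le_sqrt hbound
    rwa [Real.sqrt_sq (by positivity)] at h1
  calc frob (s • ((V + U) * P⁻¹) - (V + U)) = frob E := by rw [hLX, hfrobL]
    _ ≤ Matrix.trace K / s := hfrobE
    _ = (1 / s) * frob U ^ 2 := by rw [hTrK]; ring
end

section
/- Let $H \in \mathbb{R}^{d\times N}$ be nonzero and let $V_0$ satisfy $V_0^\top V_0 = \alpha I$, $H^\top V_0 = 0$, with $\alpha > 0$. Let $\ell(V) = -\log\det((H+V)^\top(H+V))$ and let $\mathrm{grad}\,\ell(V_0)$ denote the projection of $\nabla\ell(V_0) = -2(H+V_0)[(H+V_0)^\top(H+V_0)]^{-1}$ onto the tangent space at $V_0$. Then $\langle H, \mathrm{grad}\,\ell(V_0)\rangle = -2\,\mathrm{Tr}\big(H^\top H (H^\top H + \alpha I)^{-1}\big) < 0$, so $H$ is a descent direction for $\ell$ at $V_0$. -/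
open Matrix

lemma aux_trace_transpose_mul_self_pos {m n : ℕ} (B : Matrix (Fin m) (Fin n) ℝ)
    (hB : B ≠ 0) : 0 < Matrix.trace (Bᵀ * B) := by
  have htr : Matrix.trace (Bᵀ * B) = ∑ j, ∑ i, B i j ^ 2 := by
    simp [Matrix.trace, Matrix.mul_apply, Matrix.diag, sq]
  rw [htr]
  obtain ⟨i, hi⟩ : ∃ i, B i ≠ 0 := by
    by_contra h
    push_neg at h
    exact hB (funext h)
  obtain ⟨j, hj⟩ : ∃ j, B i j ≠ 0 := by
    by_contra h
    push_neg at h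
    exact hi (funext h)
  refine Finset.sum_pos' (fun j _ => Finset.sum_nonneg fun i _ => sq_nonneg _) ⟨j, Finset.mem_univ j, ?_⟩
  exact Finset.sum_pos' (fun i _ => sq_nonneg _)
    ⟨i, Finset.mem_univ i, pow_pos (abs_pos.mpr hj) 2 |>.trans_eq (by rw [sq_abs])⟩

theorem stmt_12 (d N : ℕ) (α : ℝ) (hα : 0 < α) (H V₀ : Matrix (Fin d) (Fin N) ℝ)
    (hH : H ≠ 0)
    (hV : V₀ᵀ * V₀ = α • (1 : Matrix (Fin N) (Fin N) ℝ)) (hHV : Hᵀ * V₀ = 0) :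
    Matrix.trace (Hᵀ *
        (((-2 : ℝ) • ((H + V₀) * ((H + V₀)ᵀ * (H + V₀))⁻¹)) -
          V₀ * ((2 * α)⁻¹ •
            (V₀ᵀ * ((-2 : ℝ) • ((H + V₀) * ((H + V₀)ᵀ * (H + V₀))⁻¹)) +
              ((-2 : ℝ) • ((H + V₀) * ((H + V₀)ᵀ * (H + V₀))⁻¹))ᵀ * V₀)))) =
      -2 * Matrix.trace (Hᵀ * H * (Hᵀ * H + α • (1 : Matrix (Fin N) (Fin N) ℝ))⁻¹) ∧
    Matrix.trace (Hᵀ *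
        (((-2 : ℝ) • ((H + V₀) * ((H + V₀)ᵀ * (H + V₀))⁻¹)) -
          V₀ * ((2 * α)⁻¹ •
            (V₀ᵀ * ((-2 : ℝ) • ((H + V₀) * ((H + V₀)ᵀ * (H + V₀))⁻¹)) +
              ((-2 : ℝ) • ((H + V₀) * ((H + V₀)ᵀ * (H + V₀))⁻¹))ᵀ * V₀)))) < 0 := by
  have hVH : V₀ᵀ * H = 0 := by
    have := congrArg Matrix.transpose hHV
    simpa [Matrix.transpose_mul] using this
  set M : Matrix (Fin N) (Fin N) ℝ := Hᵀ * H + α • 1 with hMdef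
  have hExp : (H + V₀)ᵀ * (H + V₀) = M := by
    rw [Matrix.transpose_add, Matrix.add_mul, Matrix.mul_add, Matrix.mul_add, hHV, hVH, hV, hMdef]
    abel
  -- the second summand in the inner product vanishes
  have hzero : ∀ X : Matrix (Fin N) (Fin N) ℝ, Hᵀ * (V₀ * X) = 0 := by
    intro X
    rw [← Matrix.mul_assoc, hHV, Matrix.zero_mul]
  have hmain : Hᵀ *
        (((-2 : ℝ) • ((H + V₀) * ((H + V₀)ᵀ * (H + V₀))⁻¹)) -
          V₀ * ((2 * α)⁻¹ •
            (V₀ᵀ * ((-2 : ℝ) • ((H + V₀) * ((H + V₀)ᵀ * (H + V₀))⁻¹)) +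
              ((-2 : ℝ) • ((H + V₀) * ((H + V₀)ᵀ * (H + V₀))⁻¹))ᵀ * V₀))) =
      (-2 : ℝ) • (Hᵀ * H * M⁻¹) := by
    rw [Matrix.mul_sub, hzero, sub_zero, hExp, Matrix.mul_smul, ← Matrix.mul_assoc,
      Matrix.mul_add, hHV, add_zero]
  rw [hmain]
  have hMpd : M.PosDef := by
    have h1 : ((α • (1 : Matrix (Fin N) (Fin N) ℝ))).PosDef := by
      rw [Matrix.smul_one_eq_diagonal]
      exact Matrix.posDef_diagonal_iff.mpr fun _ => hα
    have h2 : (Hᵀ * H).PosSemidef := by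
      have := Matrix.posSemidef_conjTranspose_mul_self H
      simpa using this
    exact Matrix.PosDef.posSemidef_add h2 h1
  -- positivity of trace (Hᵀ H M⁻¹)
  have hIpd : M⁻¹.PosDef := hMpd.inv
  open scoped MatrixOrder in
  set s : Matrix (Fin N) (Fin N) ℝ := CFC.sqrt M⁻¹ with hsdef
  open scoped MatrixOrder in
  have hss : s * s = M⁻¹ := CFC.sqrt_mul_sqrt_self M⁻¹ hIpd.posSemidef.nonneg
  have hsT : sᵀ = s := by
    open scoped MatrixOrder in
    have := (CFC.sqrt_nonneg M⁻¹).posSemidef.isHermitian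
    simpa [Matrix.IsHermitian] using this
  have hMinv : M⁻¹ * M = 1 := Matrix.nonsing_inv_mul M (isUnit_iff_ne_zero.mpr hMpd.det_pos.ne')
  have hHs : H * s ≠ 0 := by
    intro h
    apply hH
    have : H * (s * (s * M)) = H := by
      rw [← Matrix.mul_assoc s s M, hss, hMinv, Matrix.mul_one]
    rw [← this, ← Matrix.mul_assoc, h, Matrix.zero_mul]
  have htrpos : 0 < Matrix.trace (Hᵀ * H * M⁻¹) := by
    have h1 : Matrix.trace (Hᵀ * H * M⁻¹) = Matrix.trace ((H * s)ᵀ * (H * s)) := by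
      rw [Matrix.transpose_mul, hsT, Matrix.mul_assoc s Hᵀ (H * s),
        Matrix.trace_mul_comm s (Hᵀ * (H * s)), ← hss]
      simp [Matrix.mul_assoc]
    rw [h1]
    exact aux_trace_transpose_mul_self_pos (H * s) hHs
  constructor
  · rw [Matrix.trace_smul]
    simp [hMdef]
  · rw [Matrix.trace_smul]
    simp only [smul_eq_mul]
    nlinarith
end
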